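/- Let n ≥ 2, let r : ZMod n → [0,∞) satisfy L := 1 − 2∑_i r_i > 0, and let v : ZMod n → (0,∞) have minimum v_min := min_i v_i attained at a unique index i₀; assume α := L − n·v_min ≥ 0 and that v_min is rational. Define the map T : X_L × AddCircle 1 → X_L × AddCircle 1 by T(Δ, θ) := (F_v(Δ), θ + min{v_{i₀}, Δ_{i₀}}). Then T has at least two distinct invariant Borel probability measures. -/

import Mathlib

open MeasureTheory
open scoped ENNReal

/-- The compact set of admissible gap configurations of total free length `L`. -/
def XL (n : ℕ) [NeZero n] (L : ℝ) : Type :=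
  {Δ : ZMod n → ℝ // (∀ i, 0 ≤ Δ i) ∧ ∑ i : ZMod n, Δ i = L}

noncomputable instance (n : ℕ) [NeZero n] (L : ℝ) : MeasurableSpace (XL n L) :=
  Subtype.instMeasurableSpace

/-- The parallel gap update preserves admissibility (nonnegative velocities). -/
noncomputable def parGapUpdateXL (n : ℕ) [NeZero n] (L : ℝ)
    (v : ZMod n → ℝ) (hv : ∀ i, 0 ≤ v i) (Δ : XL n L) : XL n L :=
  ⟨fun i => Δ.1 i - min (v i) (Δ.1 i) + min (v (i + 1)) (Δ.1 (i + 1)), by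
    constructor
    · intro i
      show (0:ℝ) ≤ Δ.1 i - min (v i) (Δ.1 i) + min (v (i + 1)) (Δ.1 (i + 1))
      have h1 : min (v i) (Δ.1 i) ≤ Δ.1 i := min_le_right _ _
      have h2 : (0 : ℝ) ≤ min (v (i + 1)) (Δ.1 (i + 1)) :=
        le_min (hv _) (Δ.2.1 _)
      linarith
    · have hshift : ∑ i : ZMod n, min (v (i + 1)) (Δ.1 (i + 1)) =
          ∑ i : ZMod n, min (v i) (Δ.1 i) :=
        Fintype.sum_equiv (Equiv.addRight (1 : ZMod n)) _ _ (fun i => rfl)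
      have hsum := Δ.2.2
      calc ∑ i : ZMod n, (Δ.1 i - min (v i) (Δ.1 i) + min (v (i + 1)) (Δ.1 (i + 1)))
          = ∑ i : ZMod n, Δ.1 i - ∑ i : ZMod n, min (v i) (Δ.1 i)
            + ∑ i : ZMod n, min (v (i + 1)) (Δ.1 (i + 1)) := by
            rw [Finset.sum_add_distrib, Finset.sum_sub_distrib]
        _ = L := by rw [hshift, hsum]; ring⟩

instance (n : ℕ) [NeZero n] (L : ℝ) : MeasurableSingletonClass (XL n L) :=
  inferInstanceAs (MeasurableSingletonClass
    {Δ : ZMod n → ℝ // (∀ i, 0 ≤ Δ i) ∧ ∑ i : ZMod n, Δ i = L})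

private lemma measure_map_finsetSum {α β ι : Type*} [MeasurableSpace α] [MeasurableSpace β]
    {f : α → β} (hf : Measurable f) (s : Finset ι) (μ : ι → Measure α) :
    Measure.map f (∑ i ∈ s, μ i) = ∑ i ∈ s, Measure.map f (μ i) := by
  classical
  induction s using Finset.cons_induction with
  | empty => simp
  | cons a s ha ih => rw [Finset.sum_cons, Finset.sum_cons, Measure.map_add _ _ hf, ih]

/-- **Theorem 3 of the paper, necessity part.**  The deterministic collective
walk of `n` hard balls with constant positive velocities `v_i`, unique slowest
particle `i₀`, `α ≥ 0` and *rational* `vmin`, written in the coordinates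
(gap configuration, position of particle `i₀` on the circle), has at least two
distinct invariant Borel probability measures. -/
theorem deterministic_walk_not_uniquely_ergodic_of_rational
    (n : ℕ) [NeZero n] (hn : 2 ≤ n)
    (r : ZMod n → ℝ) (hr : ∀ i, 0 ≤ r i)
    (L : ℝ) (hLdef : L = 1 - 2 * ∑ i : ZMod n, r i) (hL : 0 < L)
    (v : ZMod n → ℝ) (hv : ∀ i, 0 < v i)
    (vmin : ℝ) (i₀ : ZMod n) (hmin : v i₀ = vmin)
    (hlb : ∀ i, vmin ≤ v i) (huniq : ∀ i, i ≠ i₀ → vmin < v i)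
    (α : ℝ) (hα : α = L - n * vmin) (hα0 : 0 ≤ α)
    (hrat : ∃ Q : ℚ, (Q : ℝ) = vmin)
    (T : XL n L × AddCircle (1 : ℝ) → XL n L × AddCircle (1 : ℝ))
    (hT : T = fun p =>
      (parGapUpdateXL n L v (fun i => (hv i).le) p.1,
        p.2 + ((min (v i₀) (p.1.1 i₀) : ℝ) : AddCircle (1 : ℝ)))) :
    ∃ μ₁ μ₂ : Measure (XL n L × AddCircle (1 : ℝ)),
      μ₁ ≠ μ₂ ∧
      (IsProbabilityMeasure μ₁ ∧ μ₁.map T = μ₁) ∧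
      (IsProbabilityMeasure μ₂ ∧ μ₂.map T = μ₂) := by
  classical
  haveI : Fact ((0:ℝ) < 1) := ⟨zero_lt_one⟩
  subst hT
  obtain ⟨Q, hQ⟩ := hrat
  have hvmin : 0 < vmin := hmin ▸ hv i₀
  -- the fixed gap configuration
  have hΔ1 : ∀ i : ZMod n, 0 ≤ vmin + if i = i₀ then α else 0 := by
    intro i; by_cases h : i = i₀ <;> simp [h] <;> linarith
  have hΔ2 : ∑ i : ZMod n, (vmin + if i = i₀ then α else 0) = L := by
    rw [Finset.sum_add_distrib, Finset.sum_const,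
      Finset.sum_ite_eq' Finset.univ i₀ (fun _ => α)]
    simp only [Finset.card_univ, ZMod.card, Finset.mem_univ, if_true, nsmul_eq_mul]
    linarith
  set Δs : XL n L := ⟨fun i => vmin + if i = i₀ then α else 0, hΔ1, hΔ2⟩ with hΔsdef
  have hmins : ∀ j : ZMod n, min (v j) (Δs.1 j) = vmin := by
    intro j
    by_cases h : j = i₀
    · subst h
      show min (v j) (vmin + if j = j then α else 0) = vmin
      rw [if_pos rfl, hmin]
      exact min_eq_left (by linarith)
    · show min (v j) (vmin + if j = i₀ then α else 0) = vmin
      rw [if_neg h, add_zero]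
      exact min_eq_right (hlb j)
  have hfix : parGapUpdateXL n L v (fun i => (hv i).le) Δs = Δs := by
    apply Subtype.ext
    funext i
    show Δs.1 i - min (v i) (Δs.1 i) + min (v (i+1)) (Δs.1 (i+1)) = Δs.1 i
    rw [hmins, hmins]; ring
  -- measurability of T
  have hTm : Measurable (fun p : XL n L × AddCircle (1:ℝ) =>
      (parGapUpdateXL n L v (fun i => (hv i).le) p.1,
        p.2 + ((min (v i₀) (p.1.1 i₀) : ℝ) : AddCircle (1 : ℝ)))) := by
    have hF : Measurable (parGapUpdateXL n L v (fun i => (hv i).le)) := by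
      unfold parGapUpdateXL
      apply Measurable.subtype_mk
      apply measurable_pi_lambda
      intro i
      have h1 : Measurable fun Δ : XL n L => Δ.1 i :=
        (measurable_pi_apply i).comp measurable_subtype_coe
      have h2 : Measurable fun Δ : XL n L => Δ.1 (i+1) :=
        (measurable_pi_apply (i+1)).comp measurable_subtype_coe
      exact (h1.sub (measurable_const.min h1)).add (measurable_const.min h2)
    refine (hF.comp measurable_fst).prodMk ?_
    have h1 : Measurable fun p : XL n L × AddCircle (1:ℝ) => p.1.1 i₀ :=
      (measurable_pi_apply i₀).comp (measurable_subtype_coe.comp measurable_fst)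
    exact measurable_snd.add (AddCircle.measurable_mk'.comp (measurable_const.min h1))
  -- the orbit measure on the circle
  haveI : NeZero Q.den := ⟨Q.den_nz⟩
  have hden : (Q.den : ℝ) * vmin = (Q.num : ℝ) := by
    rw [← hQ]
    have h : (Q.den:ℚ) * Q = (Q.num:ℚ) := by
      have h0 : (Q.den:ℚ) ≠ 0 := Nat.cast_ne_zero.mpr Q.den_nz
      field_simp [Rat.num_div_den]
      exact Rat.den_mul_eq_num Q
    exact_mod_cast congrArg (fun x : ℚ => (x : ℝ)) h
  have hker : (zmultiplesHom (AddCircle (1:ℝ)) ((vmin : ℝ) : AddCircle (1:ℝ))) (Q.den : ℤ) = 0 := by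
    show (Q.den : ℤ) • ((vmin : ℝ) : AddCircle (1:ℝ)) = 0
    have h1 : (Q.den : ℤ) • ((vmin : ℝ) : AddCircle (1:ℝ))
        = (((Q.den : ℝ) * vmin : ℝ) : AddCircle (1:ℝ)) := by
      rw [← QuotientAddGroup.mk_zsmul]
      norm_num
    rw [h1, hden]
    rw [AddCircle.coe_eq_zero_iff]
    exact ⟨Q.num, by simp⟩
  set c : ZMod Q.den →+ AddCircle (1:ℝ) :=
    ZMod.lift Q.den ⟨zmultiplesHom (AddCircle (1:ℝ)) ((vmin : ℝ) : AddCircle (1:ℝ)), hker⟩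
    with hcdef
  have hc1 : c 1 = ((vmin : ℝ) : AddCircle (1:ℝ)) := by
    have h : ((1:ℤ) : ZMod Q.den) = 1 := by push_cast; ring
    rw [hcdef, ← h, ZMod.lift_coe]
    exact one_zsmul _
  have hc0 : c 0 = 0 := map_zero c
  set ν₁ : Measure (AddCircle (1:ℝ)) :=
    (Q.den : ℝ≥0∞)⁻¹ • ∑ k : ZMod Q.den, Measure.dirac (c k) with hν₁def
  have hνden0 : ((Q.den : ℝ≥0∞)) ≠ 0 := Nat.cast_ne_zero.mpr Q.den_nz
  have hνdent : ((Q.den : ℝ≥0∞)) ≠ ⊤ := ENNReal.natCast_ne_top _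
  have hν₁prob : IsProbabilityMeasure ν₁ := by
    constructor
    rw [hν₁def, Measure.smul_apply, smul_eq_mul]
    have : (∑ k : ZMod Q.den, Measure.dirac (c k)) Set.univ = (Q.den : ℝ≥0∞) := by
      rw [Measure.coe_finset_sum, Finset.sum_apply]
      simp [Measure.dirac_apply, ZMod.card]
    rw [this, ENNReal.inv_mul_cancel hνden0 hνdent]
  have hν₁inv : Measure.map (· + ((vmin : ℝ) : AddCircle (1:ℝ))) ν₁ = ν₁ := by
    rw [hν₁def, Measure.map_smul, measure_map_finsetSum (measurable_add_const _)]
    congr 1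
    have h1 : ∀ k : ZMod Q.den,
        Measure.map (· + ((vmin : ℝ) : AddCircle (1:ℝ))) (Measure.dirac (c k))
          = Measure.dirac (c (k+1)) := by
      intro k
      rw [Measure.map_dirac' (measurable_add_const _)]
      congr 1
      rw [← hc1, ← map_add]
    simp_rw [h1]
    exact Fintype.sum_equiv (Equiv.addRight (1 : ZMod Q.den)) _ _ (fun k => rfl)
  have hvolinv : Measure.map (· + ((vmin : ℝ) : AddCircle (1:ℝ)))
      (volume : Measure (AddCircle (1:ℝ))) = volume :=
    map_add_right_eq_self volume _
  have hvolprob : IsProbabilityMeasure (volume : Measure (AddCircle (1:ℝ))) := by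
    constructor; simp
  -- generic invariance of product measures
  have hkey : ∀ ν : Measure (AddCircle (1:ℝ)), IsProbabilityMeasure ν →
      Measure.map (· + ((vmin : ℝ) : AddCircle (1:ℝ))) ν = ν →
      Measure.map (fun p : XL n L × AddCircle (1:ℝ) =>
        (parGapUpdateXL n L v (fun i => (hv i).le) p.1,
          p.2 + ((min (v i₀) (p.1.1 i₀) : ℝ) : AddCircle (1 : ℝ))))
        ((Measure.dirac Δs).prod ν) = (Measure.dirac Δs).prod ν := by
    intro ν hν hinv
    haveI := hν
    have hnull : ((Measure.dirac Δs).prod ν) {p : XL n L × AddCircle (1:ℝ) | ¬ p.1 = Δs} = 0 := by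
      refine measure_mono_null (fun p hp => (Set.mk_mem_prod hp trivial :
        p ∈ ({Δs}ᶜ : Set (XL n L)) ×ˢ (Set.univ : Set (AddCircle (1:ℝ))))) ?_
      rw [Measure.prod_prod]
      have hd0 : (Measure.dirac Δs) ({Δs}ᶜ : Set (XL n L)) = 0 := by
        rw [Measure.dirac_apply]; simp
      rw [hd0, zero_mul]
    have hae : (fun p : XL n L × AddCircle (1:ℝ) =>
        (parGapUpdateXL n L v (fun i => (hv i).le) p.1,
          p.2 + ((min (v i₀) (p.1.1 i₀) : ℝ) : AddCircle (1 : ℝ))))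
        =ᵐ[(Measure.dirac Δs).prod ν]
        (fun p : XL n L × AddCircle (1:ℝ) =>
          ((Δs, p.2 + ((vmin : ℝ) : AddCircle (1:ℝ))) : XL n L × AddCircle (1:ℝ))) := by
      have hfull : ∀ᵐ p : XL n L × AddCircle (1:ℝ) ∂((Measure.dirac Δs).prod ν), p.1 = Δs := by
        rw [MeasureTheory.ae_iff]
        exact hnull
      filter_upwards [hfull] with p hp
      rw [hp, hfix, hmins i₀]
    rw [Measure.map_congr hae]
    have hS : (fun p : XL n L × AddCircle (1:ℝ) =>
        ((Δs, p.2 + ((vmin : ℝ) : AddCircle (1:ℝ))) : XL n L × AddCircle (1:ℝ)))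
        = Prod.map (fun _ : XL n L => Δs) (· + ((vmin : ℝ) : AddCircle (1:ℝ))) := rfl
    rw [hS, ← Measure.map_prod_map _ _ measurable_const (measurable_add_const _), hinv]
    congr 1
    rw [Measure.map_const]
    simp
  -- the two measures
  refine ⟨(Measure.dirac Δs).prod ν₁, (Measure.dirac Δs).prod volume, ?_, ?_, ?_⟩
  · -- distinctness
    intro h
    have hval := congrArg (fun μ : Measure (XL n L × AddCircle (1:ℝ)) =>
      μ (({Δs} : Set (XL n L)) ×ˢ ({0} : Set (AddCircle (1:ℝ))))) h
    simp only [Measure.prod_prod] at hval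
    have hd : Measure.dirac Δs ({Δs} : Set (XL n L)) = 1 :=
      Measure.dirac_apply_of_mem rfl
    rw [hd, one_mul, one_mul] at hval
    have hvol0 : (volume : Measure (AddCircle (1:ℝ))) ({0} : Set (AddCircle (1:ℝ))) = 0 := by
      have h := AddCircle.volume_closedBall (T := 1) (x := (0 : AddCircle (1:ℝ))) 0
      simpa [Metric.closedBall_zero] using h
    rw [hvol0] at hval
    have hge : (Q.den : ℝ≥0∞)⁻¹ ≤ ν₁ ({0} : Set (AddCircle (1:ℝ))) := by
      rw [hν₁def, Measure.smul_apply, smul_eq_mul]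
      have h1 : (1 : ℝ≥0∞) ≤ (∑ k : ZMod Q.den, Measure.dirac (c k))
          ({0} : Set (AddCircle (1:ℝ))) := by
        rw [Measure.coe_finset_sum, Finset.sum_apply]
        have := Finset.single_le_sum
          (f := fun k : ZMod Q.den => Measure.dirac (c k) ({0} : Set (AddCircle (1:ℝ))))
          (fun k _ => zero_le) (Finset.mem_univ (0 : ZMod Q.den))
        have h0 : Measure.dirac (c 0) ({0} : Set (AddCircle (1:ℝ))) = 1 :=
          Measure.dirac_apply_of_mem (by rw [hc0]; rfl)
        simpa only [h0] using this
      calc (Q.den : ℝ≥0∞)⁻¹ = (Q.den : ℝ≥0∞)⁻¹ * 1 := (mul_one _).symm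
        _ ≤ _ := mul_le_mul_right h1 _
    rw [hval] at hge
    exact (ENNReal.inv_ne_zero.mpr hνdent) (le_antisymm hge zero_le)
  · exact ⟨by haveI := hν₁prob; infer_instance, hkey ν₁ hν₁prob hν₁inv⟩
  · exact ⟨by haveI := hvolprob; infer_instance, hkey volume hvolprob hvolinv⟩
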